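/- In the algebra A' = k⟨x,y,z⟩/(yz−αzy+x², zx−αxz, xy−αyx), if α is a primitive ℓ-th root of unity (ℓ = |α| finite), then x^ℓ, y^ℓ, and z^ℓ are central elements of A'. -/

import Mathlib

noncomputable section

/-- Defining relations of the Type S' Calabi–Yau quantum polynomial algebra
`A' = k⟨x,y,z⟩/(yz - αzy + x², zx - αxz, xy - αyx)`. -/
inductive SRel {k : Type} [Field k] (α : k) :
    FreeAlgebra k (Fin 3) → FreeAlgebra k (Fin 3) → Prop
  | g1 : SRel α (FreeAlgebra.ι k 1 * FreeAlgebra.ι k 2)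
      (α • (FreeAlgebra.ι k 2 * FreeAlgebra.ι k 1) - FreeAlgebra.ι k 0 * FreeAlgebra.ι k 0)
  | g2 : SRel α (FreeAlgebra.ι k 2 * FreeAlgebra.ι k 0)
      (α • (FreeAlgebra.ι k 0 * FreeAlgebra.ι k 2))
  | g3 : SRel α (FreeAlgebra.ι k 0 * FreeAlgebra.ι k 1)
      (α • (FreeAlgebra.ι k 1 * FreeAlgebra.ι k 0))

/-- The image of `x` in `A'`. -/
def SX {k : Type} [Field k] (α : k) : RingQuot (SRel α) :=
  RingQuot.mkAlgHom k (SRel α) (FreeAlgebra.ι k 0)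

/-- The image of `y` in `A'`. -/
def SY {k : Type} [Field k] (α : k) : RingQuot (SRel α) :=
  RingQuot.mkAlgHom k (SRel α) (FreeAlgebra.ι k 1)

/-- The image of `z` in `A'`. -/
def SZ {k : Type} [Field k] (α : k) : RingQuot (SRel α) :=
  RingQuot.mkAlgHom k (SRel α) (FreeAlgebra.ι k 2)

/-- The central element `g = xyz + (1-α³)⁻¹ x³` of `A'`. -/
def SG {k : Type} [Field k] (α : k) : RingQuot (SRel α) :=
  SX α * SY α * SZ α + (1 - α ^ 3)⁻¹ • (SX α) ^ 3

section Helpers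
variable {k : Type} [Field k] (α : k)

lemma rel1 : SY α * SZ α = α • (SZ α * SY α) - SX α * SX α := by
  have h := RingQuot.mkAlgHom_rel k (SRel.g1 (k := k) (α := α))
  simpa [SX, SY, SZ, map_mul, map_sub, map_smul] using h

lemma rel2 : SZ α * SX α = α • (SX α * SZ α) := by
  have h := RingQuot.mkAlgHom_rel k (SRel.g2 (k := k) (α := α))
  simpa [SX, SZ, map_mul, map_smul] using h

lemma rel3 : SX α * SY α = α • (SY α * SX α) := by
  have h := RingQuot.mkAlgHom_rel k (SRel.g3 (k := k) (α := α))
  simpa [SX, SY, map_mul, map_smul] using h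

variable {α}

lemma rel3' (hα : α ≠ 0) : SY α * SX α = α⁻¹ • (SX α * SY α) := by
  rw [rel3, smul_smul, inv_mul_cancel₀ hα, one_smul]

lemma rel1' (hα : α ≠ 0) :
    SZ α * SY α = α⁻¹ • (SY α * SZ α) + α⁻¹ • (SX α * SX α) := by
  have h : α • (SZ α * SY α) = SY α * SZ α + SX α * SX α := by
    rw [rel1]; abel
  calc SZ α * SY α = α⁻¹ • (α • (SZ α * SY α)) := by
        rw [smul_smul, inv_mul_cancel₀ hα, one_smul]
    _ = α⁻¹ • (SY α * SZ α + SX α * SX α) := by rw [h]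
    _ = _ := by rw [smul_add]

lemma yxx (hα : α ≠ 0) :
    SY α * SX α * SX α = (α⁻¹ * α⁻¹) • (SX α * SX α * SY α) := by
  rw [rel3' hα, smul_mul_assoc, mul_assoc, rel3' hα, mul_smul_comm, smul_smul, ← mul_assoc]

lemma zxx : SZ α * SX α * SX α = (α * α) • (SX α * SX α * SZ α) := by
  rw [rel2, smul_mul_assoc, mul_assoc, rel2, mul_smul_comm, smul_smul, ← mul_assoc]

lemma xpow_y (n : ℕ) : SX α ^ n * SY α = α ^ n • (SY α * SX α ^ n) := by
  induction n with
  | zero => simp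
  | succ n ih =>
    calc SX α ^ (n + 1) * SY α = SX α ^ n * (SX α * SY α) := by
          rw [pow_succ, mul_assoc]
      _ = α • (SX α ^ n * SY α * SX α) := by rw [rel3, mul_smul_comm, mul_assoc]
      _ = α • ((α ^ n • (SY α * SX α ^ n)) * SX α) := by rw [ih]
      _ = α ^ (n + 1) • (SY α * SX α ^ (n + 1)) := by
          rw [smul_mul_assoc, smul_smul, mul_assoc, ← pow_succ, ← pow_succ']

lemma z_xpow (n : ℕ) : SZ α * SX α ^ n = α ^ n • (SX α ^ n * SZ α) := by
  induction n with
  | zero => simp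
  | succ n ih =>
    calc SZ α * SX α ^ (n + 1) = (SZ α * SX α ^ n) * SX α := by
          rw [pow_succ, mul_assoc]
      _ = α ^ n • (SX α ^ n * (SZ α * SX α)) := by rw [ih, smul_mul_assoc, mul_assoc]
      _ = α ^ n • (SX α ^ n * (α • (SX α * SZ α))) := by rw [rel2]
      _ = α ^ (n + 1) • (SX α ^ (n + 1) * SZ α) := by
          rw [mul_smul_comm, smul_smul, ← mul_assoc, ← pow_succ, ← pow_succ]

lemma x_ypow (n : ℕ) : SX α * SY α ^ n = α ^ n • (SY α ^ n * SX α) := by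
  induction n with
  | zero => simp
  | succ n ih =>
    calc SX α * SY α ^ (n + 1) = (SX α * SY α ^ n) * SY α := by
          rw [pow_succ, mul_assoc]
      _ = α ^ n • (SY α ^ n * (SX α * SY α)) := by rw [ih, smul_mul_assoc, mul_assoc]
      _ = α ^ n • (SY α ^ n * (α • (SY α * SX α))) := by rw [rel3]
      _ = α ^ (n + 1) • (SY α ^ (n + 1) * SX α) := by
          rw [mul_smul_comm, smul_smul, ← mul_assoc, ← pow_succ, ← pow_succ]

lemma zpow_x (n : ℕ) : SZ α ^ n * SX α = α ^ n • (SX α * SZ α ^ n) := by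
  induction n with
  | zero => simp
  | succ n ih =>
    calc SZ α ^ (n + 1) * SX α = SZ α ^ n * (SZ α * SX α) := by
          rw [pow_succ, mul_assoc]
      _ = α • (SZ α ^ n * SX α * SZ α) := by rw [rel2, mul_smul_comm, mul_assoc]
      _ = α • ((α ^ n • (SX α * SZ α ^ n)) * SZ α) := by rw [ih]
      _ = α ^ (n + 1) • (SX α * SZ α ^ (n + 1)) := by
          rw [smul_mul_assoc, smul_smul, mul_assoc, ← pow_succ, ← pow_succ']

def dcoef (α : k) (n : ℕ) : k := α ^ n * ∑ j ∈ Finset.range (n + 1), (α⁻¹ ^ 3) ^ j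

def ecoef (α : k) (n : ℕ) : k := α⁻¹ ^ (n + 1) * ∑ j ∈ Finset.range (n + 1), (α ^ 3) ^ j

lemma dcoef_succ (hα : α ≠ 0) (n : ℕ) :
    dcoef α (n + 1) = α ^ (n + 1) + α⁻¹ * α⁻¹ * dcoef α n := by
  have key : α ^ (n + 1) * α⁻¹ ^ 3 = α⁻¹ * α⁻¹ * α ^ n := by
    field_simp
    ring
  unfold dcoef
  rw [geom_sum_succ, mul_add, mul_one, ← mul_assoc, key]
  ring

lemma ecoef_succ (hα : α ≠ 0) (n : ℕ) :
    ecoef α (n + 1) = α⁻¹ ^ (n + 2) + α * α * ecoef α n := by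
  have key : α⁻¹ ^ (n + 2) * α ^ 3 = α * α * α⁻¹ ^ (n + 1) := by
    field_simp
    rw [show n + 2 = (n + 1) + 1 by ring, pow_succ, mul_comm, mul_assoc, one_div, inv_mul_cancel₀ hα, mul_one]
  unfold ecoef
  rw [geom_sum_succ, mul_add, mul_one, ← mul_assoc, key]
  ring

lemma ypow_z (hα : α ≠ 0) (n : ℕ) :
    SY α ^ (n + 1) * SZ α =
      α ^ (n + 1) • (SZ α * SY α ^ (n + 1)) -
        dcoef α n • (SX α * SX α * SY α ^ n) := by
  induction n with
  | zero =>
    simp only [pow_one, pow_zero, mul_one, dcoef]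
    norm_num
    exact rel1 α
  | succ n ih =>
    have step : SY α ^ (n + 2) * SZ α = SY α * (SY α ^ (n + 1) * SZ α) := by
      rw [pow_succ', mul_assoc]
    have hy2 : SZ α * SY α * SY α ^ (n + 1) = SZ α * SY α ^ (n + 2) := by
      rw [mul_assoc, ← pow_succ']
    have hx2 : SX α * SX α * SY α * SY α ^ n = SX α * SX α * SY α ^ (n + 1) := by
      rw [mul_assoc, ← pow_succ']
    rw [step, ih, mul_sub, mul_smul_comm, mul_smul_comm]
    simp only [← mul_assoc]
    rw [rel1 α, yxx hα]
    simp only [sub_mul, smul_mul_assoc, smul_smul]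
    rw [hy2, hx2, dcoef_succ hα]
    match_scalars <;> ring

lemma zpow_y (hα : α ≠ 0) (n : ℕ) :
    SZ α ^ (n + 1) * SY α =
      α⁻¹ ^ (n + 1) • (SY α * SZ α ^ (n + 1)) +
        ecoef α n • (SX α * SX α * SZ α ^ n) := by
  induction n with
  | zero =>
    simp only [pow_one, pow_zero, mul_one, ecoef]
    norm_num
    exact rel1' hα
  | succ n ih =>
    have step : SZ α ^ (n + 2) * SY α = SZ α * (SZ α ^ (n + 1) * SY α) := by
      rw [pow_succ', mul_assoc]
    have hy2 : SY α * SZ α * SZ α ^ (n + 1) = SY α * SZ α ^ (n + 2) := by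
      rw [mul_assoc, ← pow_succ']
    have hx2 : SX α * SX α * SZ α * SZ α ^ n = SX α * SX α * SZ α ^ (n + 1) := by
      rw [mul_assoc, ← pow_succ']
    rw [step, ih, mul_add, mul_smul_comm, mul_smul_comm]
    simp only [← mul_assoc]
    rw [rel1' hα, zxx]
    simp only [add_mul, smul_mul_assoc, smul_smul]
    rw [hy2, hx2, ecoef_succ hα]
    match_scalars <;> ring

lemma mem_center_of (u : RingQuot (SRel α))
    (hx : SX α * u = u * SX α) (hy : SY α * u = u * SY α)
    (hz : SZ α * u = u * SZ α) :
    u ∈ Subalgebra.center k (RingQuot (SRel α)) := by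
  rw [Subalgebra.mem_center_iff]
  intro b
  obtain ⟨f, rfl⟩ := RingQuot.mkAlgHom_surjective k (SRel α) b
  induction f with
  | grade0 r => simp [Algebra.commutes]
  | grade1 i =>
    fin_cases i
    · simpa [SX] using hx
    · simpa [SY] using hy
    · simpa [SZ] using hz
  | mul a b ha hb => rw [map_mul, mul_assoc, hb, ← mul_assoc, ha, mul_assoc]
  | add a b ha hb => rw [map_add, add_mul, mul_add, ha, hb]

end Helpers

theorem stmt5 {k : Type} [Field k] [IsAlgClosed k] [CharZero k] (α : k) (ℓ : ℕ)
    (hprim : IsPrimitiveRoot α ℓ) (hα3 : α ^ 3 ≠ 1) :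
    (SX α) ^ ℓ ∈ Subalgebra.center k (RingQuot (SRel α)) ∧
    (SY α) ^ ℓ ∈ Subalgebra.center k (RingQuot (SRel α)) ∧
    (SZ α) ^ ℓ ∈ Subalgebra.center k (RingQuot (SRel α)) := by
  rcases Nat.eq_zero_or_pos ℓ with h0 | hpos
  · subst h0
    simp only [pow_zero]
    exact ⟨Subalgebra.one_mem _, Subalgebra.one_mem _, Subalgebra.one_mem _⟩
  have hℓ : α ^ ℓ = 1 := hprim.pow_eq_one
  have hα : α ≠ 0 := by
    intro h
    rw [h, zero_pow hpos.ne'] at hℓ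
    exact zero_ne_one hℓ
  have hinv : (α⁻¹) ^ ℓ = 1 := by rw [inv_pow, hℓ, inv_one]
  have hα3' : (α⁻¹ ^ 3) ≠ 1 := by
    intro h
    apply hα3
    have h2 : (α ^ 3) * (α⁻¹ ^ 3) = 1 := by
      rw [← mul_pow, mul_inv_cancel₀ hα, one_pow]
    rw [h, mul_one] at h2
    exact h2
  obtain ⟨m, rfl⟩ : ∃ m, ℓ = m + 1 := ⟨ℓ - 1, (Nat.succ_pred_eq_of_pos hpos).symm⟩
  have hd : dcoef α m = 0 := by
    unfold dcoef
    rw [geom_sum_eq hα3']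
    have h4 : (α⁻¹ ^ 3) ^ (m + 1) = 1 := by
      rw [← pow_mul, mul_comm 3 (m + 1), pow_mul, hinv, one_pow]
    rw [h4, sub_self, zero_div, mul_zero]
  have he : ecoef α m = 0 := by
    unfold ecoef
    rw [geom_sum_eq hα3]
    have h4 : (α ^ 3) ^ (m + 1) = 1 := by
      rw [← pow_mul, mul_comm 3 (m + 1), pow_mul, hℓ, one_pow]
    rw [h4, sub_self, zero_div, mul_zero]
  refine ⟨?_, ?_, ?_⟩
  · apply mem_center_of
    · exact ((Commute.refl (SX α)).pow_right (m + 1)).eq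
    · have h5 := xpow_y (α := α) (m + 1)
      rw [hℓ, one_smul] at h5
      exact h5.symm
    · have h5 := z_xpow (α := α) (m + 1)
      rw [hℓ, one_smul] at h5
      exact h5
  · apply mem_center_of
    · have h5 := x_ypow (α := α) (m + 1)
      rw [hℓ, one_smul] at h5
      exact h5
    · exact ((Commute.refl (SY α)).pow_right (m + 1)).eq
    · have h5 := ypow_z (α := α) hα m
      rw [hℓ, one_smul, hd, zero_smul, sub_zero] at h5
      exact h5.symm
  · apply mem_center_of
    · have h5 := zpow_x (α := α) (m + 1)
      rw [hℓ, one_smul] at h5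
      exact h5.symm
    · have h5 := zpow_y (α := α) hα m
      rw [hinv, one_smul, he, zero_smul, add_zero] at h5
      exact h5.symm
    · exact ((Commute.refl (SZ α)).pow_right (m + 1)).eq
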